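/- Dependent swaps give a strict Tamari increase: let π = α u v β and ρ = α v u β with u < v, and suppose no entry of β lies strictly between u and v. Then ε(h(w(π))) <_T ε(h(w(ρ))) in the Tamari order on planar binary trees. -/

import Mathlib

/-- Indexed terms of the language `L^I`: generators `2^k` and partial compositions. -/
inductive Trm : Type
  | gen : ℕ → Trm
  | comp : Trm → ℕ → Trm → Trm
deriving DecidableEq

namespace Trm

/-- Arity `|A|`. -/
def arity : Trm → ℕ
  | gen _ => 2
  | comp A _ B => A.arity + B.arity - 1

/-- Set of indices occurring in a term. -/
def ind : Trm → Finset ℕ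
  | gen k => {k}
  | comp A _ B => A.ind ∪ B.ind

/-- Root index. -/
def root : Trm → ℕ
  | gen k => k
  | comp A _ _ => A.root

/-- Number of occurrences of the generator. -/
def countGen : Trm → ℕ
  | gen _ => 1
  | comp A _ B => A.countGen + B.countGen

end Trm

/-- The congruence `=_I` generated by (assoc1) and (assoc2). -/
inductive IEq : Trm → Trm → Prop
  | refl (A : Trm) : IEq A A
  | symm {A B} : IEq A B → IEq B A
  | trans {A B C} : IEq A B → IEq B C → IEq A C
  | congr {A A' B B'} (n : ℕ) : IEq A A' → IEq B B' →
      IEq (Trm.comp A n B) (Trm.comp A' n B')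
  | assoc1 (A B C : Trm) (n m : ℕ) : n ≤ m → m < n + B.arity →
      IEq (Trm.comp (Trm.comp A n B) m C) (Trm.comp A n (Trm.comp B (m - n + 1) C))
  | assoc2 (A B C : Trm) (n m : ℕ) : n + B.arity ≤ m →
      IEq (Trm.comp (Trm.comp A n B) m C) (Trm.comp (Trm.comp A (m - B.arity + 1) C) n B)

/-- Planar binary trees. -/
inductive BT : Type
  | leaf : BT
  | node : BT → BT → BT
deriving DecidableEq

namespace BT

/-- Number of leaves. -/
def leaves : BT → ℕ
  | leaf => 1
  | node l r => l.leaves + r.leaves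

/-- Graft `S` at the `i`-th leaf (1-indexed) of a tree. -/
def graft : BT → ℕ → BT → BT
  | leaf, _, S => S
  | node l r, i, S =>
    if i ≤ l.leaves then node (l.graft i S) r else node l (r.graft (i - l.leaves) S)

end BT

/-- Evaluation `ε` of indexed terms to planar binary trees. -/
def Trm.eval : Trm → BT
  | Trm.gen _ => BT.node BT.leaf BT.leaf
  | Trm.comp A i B => A.eval.graft i B.eval

/-- `l`-factors. -/
inductive LFactor : Trm → Prop
  | gen (k : ℕ) : LFactor (Trm.gen k)
  | step {A : Trm} (j : ℕ) : LFactor A → j ∉ A.ind →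
      LFactor (Trm.comp A ((A.ind.filter (· < j)).card + 1) (Trm.gen j))

/-- Auxiliary for the head-insertion encoding: `done` is the list of already
inserted letters. -/
def hAux : Trm → List ℕ → List ℕ → Trm
  | A, _, [] => A
  | A, done, y :: rest =>
      hAux (Trm.comp A ((done.filter (· < y)).length + 1) (Trm.gen y)) (done ++ [y]) rest

/-- Head-insertion encoding `h` (junk value on the empty word). -/
def hWord : List ℕ → Trm
  | [] => Trm.gen 0
  | x :: rest => hAux (Trm.gen x) [x] rest

/-- `u_a(x)`: number of letters to the left of `x` in `a` that are greater than `x`. -/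
def uCount (a : List ℕ) (x : ℕ) : ℕ := ((a.takeWhile (· ≠ x)).filter (x < ·)).length

/-- Decreasing rearrangement of a word. -/
def sortDesc (a : List ℕ) : List ℕ := (a.mergeSort (· ≤ ·)).reverse

/-- Decreasing encoding `f` (junk value on the empty word). -/
def fWord (a : List ℕ) : Trm :=
  match sortDesc a with
  | [] => Trm.gen 0
  | k :: rest => rest.foldl (fun A x => Trm.comp A (uCount a x + 1) (Trm.gen x)) (Trm.gen k)

/-- Standardization of a word of distinct integers. -/
def std (a : List ℕ) : List ℕ := a.map (fun x => (a.filter (· ≤ x)).length)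

/-- Tonks' vertex map, splitting form `φ`. -/
def tonksPhi (a : List ℕ) : BT :=
  match ha : a.getLast? with
  | none => BT.leaf
  | some x =>
      BT.node (tonksPhi (std (a.filter (· < x)))) (tonksPhi (std (a.filter (x < ·))))
termination_by a.length
decreasing_by
  · have hx : x ∈ a := List.mem_of_mem_getLast? (Option.mem_def.mpr ha)
    have : (a.filter (· < x)).length < a.length := by
      apply List.length_filter_lt_length_iff_exists.2
      exact ⟨x, hx, by simp⟩
    simp only [std, List.length_map, List.unattach]
    refine lt_of_lt_of_eq ?_ List.length_attach
    apply List.length_filter_lt_length_iff_exists.2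
    exact ⟨⟨x, hx⟩, List.mem_attach _ _, by simp⟩
  · have hx : x ∈ a := List.mem_of_mem_getLast? (Option.mem_def.mpr ha)
    have : (a.filter (x < ·)).length < a.length := by
      apply List.length_filter_lt_length_iff_exists.2
      exact ⟨x, hx, by simp⟩
    simp only [std, List.length_map, List.unattach]
    refine lt_of_lt_of_eq ?_ List.length_attach
    apply List.length_filter_lt_length_iff_exists.2
    exact ⟨⟨x, hx⟩, List.mem_attach _ _, by simp⟩

/-- Tonks' vertex map, head-grafting form `φ̂`. -/
def phiHat : List ℕ → BT
  | [] => BT.leaf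
  | x :: rest => (phiHat (std rest)).graft x (BT.node BT.leaf BT.leaf)
termination_by a => a.length
decreasing_by
  simp [std]

/-- The Loday–Ronco map `ψ`. -/
def lodayPsi (a : List ℕ) : BT :=
  match hm : a.maximum with
  | none => BT.leaf
  | some m =>
      let i := a.idxOf m
      BT.node (lodayPsi (std (a.take i))) (lodayPsi (std (a.drop (i + 1))))
termination_by a.length
decreasing_by
  · have hmem : m ∈ a := List.maximum_mem hm
    have hi : a.idxOf m < a.length := List.idxOf_lt_length_iff.2 hmem
    simp only [std, List.length_map, List.length_take]
    omega
  · have : a ≠ [] := by rintro rfl; simp [List.maximum] at hm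
    have : 0 < a.length := List.length_pos_iff.2 this
    simp only [std, List.length_map, List.length_drop]
    omega

/-- Inverse of a permutation word on `{1,…,n}`. -/
def invWord (π : List ℕ) : List ℕ :=
  (List.range π.length).map (fun j => π.idxOf (j + 1) + 1)

/-- One Tamari (right rotation) step, at any subtree. -/
inductive TamariStep : BT → BT → Prop
  | rot (X Y Z : BT) : TamariStep (BT.node (BT.node X Y) Z) (BT.node X (BT.node Y Z))
  | left {l l'} (r : BT) : TamariStep l l' → TamariStep (BT.node l r) (BT.node l' r)
  | right (l : BT) {r r'} : TamariStep r r' → TamariStep (BT.node l r) (BT.node l r')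

/-- The Tamari order. -/
def TamariLE : BT → BT → Prop := Relation.ReflTransGen TamariStep

/-- The strict Tamari order. -/
def TamariLT : BT → BT → Prop := Relation.TransGen TamariStep

/-- One cover of the right weak Bruhat order on words. -/
inductive BruhatStep : List ℕ → List ℕ → Prop
  | swap (α : List ℕ) {u v : ℕ} (β : List ℕ) : u < v →
      BruhatStep (α ++ u :: v :: β) (α ++ v :: u :: β)

/-- The right weak Bruhat order on words. -/
def BruhatLE : List ℕ → List ℕ → Prop := Relation.ReflTransGen BruhatStep

/-- Head-insertion index `k(a; σ)`. -/
def kIdx (a : ℕ) (σ : List ℕ) : ℕ := 1 + (σ.filter (· < a)).length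

/-- The basic caret. -/
def caret : BT := BT.node BT.leaf BT.leaf

lemma BT.leaves_pos (T : BT) : 0 < T.leaves := by
  induction T <;> simp [BT.leaves] <;> omega

lemma leaves_graft_caret (T : BT) (i : ℕ) :
    (T.graft i caret).leaves = T.leaves + 1 := by
  induction T generalizing i with
  | leaf => simp [BT.graft, BT.leaves, caret]
  | node l r ihl ihr =>
    simp only [BT.graft]
    split <;> simp [BT.leaves, ihl, ihr] <;> omega

lemma TamariStep.leaves_eq {T T' : BT} (h : TamariStep T T') : T.leaves = T'.leaves := by
  induction h <;> simp_all [BT.leaves] <;> omega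

lemma TamariStep.graft_base {T T' : BT} (h : TamariStep T T') (i : ℕ) (S : BT) :
    TamariStep (T.graft i S) (T'.graft i S) := by
  induction h generalizing i with
  | rot X Y Z =>
    simp only [BT.graft, BT.leaves]
    by_cases h1 : i ≤ X.leaves
    · have h2 : i ≤ X.leaves + Y.leaves := le_trans h1 (Nat.le_add_right _ _)
      simp only [if_pos h2, if_pos h1]
      exact TamariStep.rot _ _ _
    · by_cases h2 : i ≤ X.leaves + Y.leaves
      · simp only [if_pos h2, if_neg h1, if_pos (by omega : i - X.leaves ≤ Y.leaves)]
        exact TamariStep.rot _ _ _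
      · simp only [if_neg h2, if_neg h1, if_neg (by omega : ¬ i - X.leaves ≤ Y.leaves),
          (by omega : i - (X.leaves + Y.leaves) = i - X.leaves - Y.leaves)]
        exact TamariStep.rot _ _ _
  | left r h ih =>
    rename_i l l'
    simp only [BT.graft]
    by_cases h1 : i ≤ l.leaves
    · rw [if_pos h1, if_pos (h.leaves_eq ▸ h1)]
      exact TamariStep.left _ (ih i)
    · rw [if_neg h1, if_neg (h.leaves_eq ▸ h1), h.leaves_eq]
      exact TamariStep.left _ ‹TamariStep _ _›
  | right l h ih =>
    simp only [BT.graft]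
    split
    · exact TamariStep.right _ ‹TamariStep _ _›
    · exact TamariStep.right _ (ih _)

lemma double_graft_step (T : BT) (i : ℕ) (h1 : 1 ≤ i) (h2 : i ≤ T.leaves) :
    TamariStep ((T.graft i caret).graft i caret) ((T.graft i caret).graft (i + 1) caret) := by
  induction T generalizing i with
  | leaf =>
    have hi : i = 1 := by simp [BT.leaves] at h2; omega
    subst hi
    simp only [BT.graft, caret, BT.leaves]
    norm_num
    exact TamariStep.rot _ _ _
  | node l r ihl ihr =>
    by_cases hi : i ≤ l.leaves
    · have hg : (BT.node l r).graft i caret = BT.node (l.graft i caret) r := by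
        simp [BT.graft, hi]
      rw [hg]
      have hl1 : i ≤ (l.graft i caret).leaves := by rw [leaves_graft_caret]; omega
      have hl2 : i + 1 ≤ (l.graft i caret).leaves := by rw [leaves_graft_caret]; omega
      simp only [BT.graft, if_pos hl1, if_pos hl2]
      exact TamariStep.left _ (ihl i h1 hi)
    · have hg : (BT.node l r).graft i caret = BT.node l (r.graft (i - l.leaves) caret) := by
        simp [BT.graft, hi]
      rw [hg]
      simp only [BT.graft, if_neg hi, if_neg (show ¬ i + 1 ≤ l.leaves by omega)]
      have he : i + 1 - l.leaves = (i - l.leaves) + 1 := by omega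
      rw [he]
      have hlr : i - l.leaves ≤ r.leaves := by
        simp [BT.leaves] at h2; omega
      exact TamariStep.right _ (ihr (i - l.leaves) (by omega) hlr)

lemma eval_hAux_leaves (rest : List ℕ) : ∀ (A : Trm) (done : List ℕ),
    (hAux A done rest).eval.leaves = A.eval.leaves + rest.length := by
  induction rest with
  | nil => intro A done; simp [hAux]
  | cons y ys ih =>
    intro A done
    simp only [hAux, ih, Trm.eval]
    have : (A.eval.graft ((done.filter (· < y)).length + 1)
        (Trm.gen y).eval).leaves = A.eval.leaves + 1 := by
      simpa [Trm.eval, caret] using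
        leaves_graft_caret A.eval ((done.filter (· < y)).length + 1)
    simp [Trm.eval] at this
    simp [this, List.length_cons]
    omega

lemma hAux_step (rest : List ℕ) : ∀ {A A' : Trm} (done done' : List ℕ),
    TamariStep A.eval A'.eval →
    (∀ y, (done.filter (· < y)).length = (done'.filter (· < y)).length) →
    TamariStep (hAux A done rest).eval (hAux A' done' rest).eval := by
  induction rest with
  | nil => intro A A' done done' hstep _; simpa [hAux] using hstep
  | cons y ys ih =>
    intro A A' done done' hstep hcnt
    simp only [hAux]
    apply ih
    · simp only [Trm.eval, hcnt y]
      exact hstep.graft_base _ _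
    · intro z
      simp [List.filter_append, hcnt z]

lemma hAux_append (l1 : List ℕ) : ∀ (A : Trm) (done l2 : List ℕ),
    hAux A done (l1 ++ l2) = hAux (hAux A done l1) (done ++ l1) l2 := by
  induction l1 with
  | nil => intro A done l2; simp [hAux]
  | cons y ys ih =>
    intro A done l2
    simp only [List.cons_append, hAux, List.append_eq, ih, List.append_assoc, List.singleton_append, List.nil_append]

lemma filter_two_swap (u v z : ℕ) :
    (([v, u] : List ℕ).filter (· < z)).length = (([u, v] : List ℕ).filter (· < z)).length := by
  simp only [List.filter]
  by_cases h1 : u < z <;> by_cases h2 : v < z <;> simp [h1, h2]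

lemma swap_aux (u v : ℕ) (huv : u < v) (A : Trm) (done rest : List ℕ)
    (hcnt : (done.filter (· < u)).length = (done.filter (· < v)).length)
    (hlv : done.length + 1 ≤ A.eval.leaves) :
    TamariStep (hAux A done (v :: u :: rest)).eval (hAux A done (u :: v :: rest)).eval := by
  set c := (done.filter (· < v)).length with hc
  have hcu : ((done ++ [v]).filter (· < u)).length = c := by
    simp [List.filter_append, List.filter, Nat.not_lt.2 (le_of_lt huv), hcnt]
  have hcv : ((done ++ [u]).filter (· < v)).length = c + 1 := by
    simp [List.filter_append, List.filter, huv, hc]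
  simp only [hAux, hcu, hcv, hcnt, ← hc]
  apply hAux_step
  · simp only [Trm.eval]
    have hT : TamariStep ((A.eval.graft (c + 1) caret).graft (c + 1) caret)
        ((A.eval.graft (c + 1) caret).graft (c + 1 + 1) caret) := by
      apply double_graft_step
      · omega
      · have : c ≤ done.length := by
          rw [hc]; exact le_trans (List.length_filter_le _ _) le_rfl
        omega
    simpa [caret, Trm.eval] using hT
  · intro z
    have := filter_two_swap u v z
    simp only [show done ++ [v] ++ [u] = done ++ [v, u] by simp,
      show done ++ [u] ++ [v] = done ++ [u, v] by simp,
      List.filter_append, List.length_append, this]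

theorem dependent_swap_strict (α β : List ℕ) (u v : ℕ) (huv : u < v)
    (hnd : (α ++ u :: v :: β).Nodup) (hpos : ∀ x ∈ α ++ u :: v :: β, 0 < x)
    (hdep : ¬ ∃ x ∈ β, u < x ∧ x < v) :
    TamariLT ((hWord (α ++ u :: v :: β).reverse).eval)
      ((hWord (α ++ v :: u :: β).reverse).eval) := by
  apply Relation.TransGen.single
  have hw1 : (α ++ u :: v :: β).reverse = β.reverse ++ v :: u :: α.reverse := by simp
  have hw2 : (α ++ v :: u :: β).reverse = β.reverse ++ u :: v :: α.reverse := by simp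
  rw [hw1, hw2]
  have hu_notin : u ∉ β := by
    have h2 := List.Nodup.of_append_right hnd
    simp only [List.nodup_cons] at h2
    exact fun h => h2.1 (List.mem_cons_of_mem _ h)
  have hcnt : (β.reverse.filter (· < u)).length = (β.reverse.filter (· < v)).length := by
    have hfe : β.reverse.filter (· < u) = β.reverse.filter (· < v) := by
      apply List.filter_congr
      intro x hx
      have hxβ : x ∈ β := List.mem_reverse.1 hx
      have hne : x ≠ u := fun h => hu_notin (h ▸ hxβ)
      have hnb : ¬ (u < x ∧ x < v) := fun h => hdep ⟨x, hxβ, h⟩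
      rw [decide_eq_decide]
      constructor
      · intro h; omega
      · intro h
        by_contra h2
        exact hnb ⟨by omega, h⟩
    rw [hfe]
  rcases hβ : β.reverse with _ | ⟨x, xs⟩
  · simp only [List.nil_append, hWord]
    have e1 : hAux (Trm.gen v) [v] (u :: α.reverse)
        = hAux (Trm.comp (Trm.gen v) 1 (Trm.gen u)) [v, u] α.reverse := by
      simp [hAux, List.filter, Nat.not_lt.2 (le_of_lt huv)]
    have e2 : hAux (Trm.gen u) [u] (v :: α.reverse)
        = hAux (Trm.comp (Trm.gen u) 2 (Trm.gen v)) [u, v] α.reverse := by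
      simp [hAux, List.filter, huv]
    rw [e1, e2]
    apply hAux_step
    · have : TamariStep (BT.node (BT.node BT.leaf BT.leaf) BT.leaf)
          (BT.node BT.leaf (BT.node BT.leaf BT.leaf)) := TamariStep.rot _ _ _
      simpa [Trm.eval, BT.graft, BT.leaves] using this
    · intro z; exact filter_two_swap u v z
  · simp only [List.cons_append, hWord]
    rw [show xs ++ v :: u :: α.reverse = xs ++ (v :: u :: α.reverse) by simp,
      show xs ++ u :: v :: α.reverse = xs ++ (u :: v :: α.reverse) by simp,
      hAux_append, hAux_append]
    have hlv : (([x] ++ xs : List ℕ)).length + 1 ≤ (hAux (Trm.gen x) [x] xs).eval.leaves := by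
      rw [eval_hAux_leaves]
      simp only [Trm.eval, BT.leaves, List.length_append, List.length_cons, List.length_nil]
      omega
    have hcnt' : ((x :: xs).filter (· < u)).length = ((x :: xs).filter (· < v)).length := by
      rw [← hβ]; exact hcnt
    exact swap_aux u v huv _ _ _ (by simpa using hcnt') hlv
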